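/- Let t ∈ ℂ and r ∈ ℝ satisfy |t| < r < 1. Then the contour integral over the circle of radius r centered at 0 satisfies (1/(2πi)) ∮_{|z|=r} z² / ((z − t)³ (1 − z)³) dz = (1 + 4t + t²)/(1 − t)⁵. (This is the Molien-formula computation of the Hilbert series of the master space of dP₀: the integrand is (z(1 − t/z)³(1 − z)³)⁻¹, the only pole inside the contour is the triple pole at z = t, and the residue evaluates to (1+4t+t²)/(1−t)⁵.) -/

import Mathlib

open Real

private lemma circleIntegral_add6 {f₁ f₂ f₃ f₄ f₅ f₆ : ℂ → ℂ} {c : ℂ} {R : ℝ}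
    (h₁ : CircleIntegrable f₁ c R) (h₂ : CircleIntegrable f₂ c R)
    (h₃ : CircleIntegrable f₃ c R) (h₄ : CircleIntegrable f₄ c R)
    (h₅ : CircleIntegrable f₅ c R) (h₆ : CircleIntegrable f₆ c R) :
    (∮ z in C(c, R), (f₁ z + f₂ z + f₃ z + f₄ z + f₅ z + f₆ z))
      = (∮ z in C(c, R), f₁ z) + (∮ z in C(c, R), f₂ z) + (∮ z in C(c, R), f₃ z)
        + (∮ z in C(c, R), f₄ z) + (∮ z in C(c, R), f₅ z) + ∮ z in C(c, R), f₆ z := by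
  simp only [circleIntegral, smul_add]
  rw [intervalIntegral.integral_add ((((h₁.out.add h₂.out).add h₃.out).add h₄.out).add h₅.out)
        h₆.out,
      intervalIntegral.integral_add (((h₁.out.add h₂.out).add h₃.out).add h₄.out) h₅.out,
      intervalIntegral.integral_add ((h₁.out.add h₂.out).add h₃.out) h₄.out,
      intervalIntegral.integral_add (h₁.out.add h₂.out) h₃.out,
      intervalIntegral.integral_add h₁.out h₂.out]

private lemma molien_eqOn (t z : ℂ) (hzt : z - t ≠ 0) (hz1 : z - 1 ≠ 0)
    (hDt : (1:ℂ) - t ≠ 0) :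
    z ^ 2 / ((z - t) ^ 3 * (1 - z) ^ 3)
      = ((1 + 4 * t + t ^ 2) / (1 - t) ^ 5) * (z - t) ^ (-1 : ℤ)
        + ((2 * t + t ^ 2) / (1 - t) ^ 4) * (z - t) ^ (-2 : ℤ)
        + (t ^ 2 / (1 - t) ^ 3) * (z - t) ^ (-3 : ℤ)
        + (-((1 + 4 * t + t ^ 2) / (1 - t) ^ 5)) * (z - 1) ^ (-1 : ℤ)
        + ((1 + 2 * t) / (1 - t) ^ 4) * (z - 1) ^ (-2 : ℤ)
        + (-(1 / (1 - t) ^ 3)) * (z - 1) ^ (-3 : ℤ) := by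
  have h1z : (1 : ℂ) - z ≠ 0 := fun h => hz1 (by rw [sub_eq_zero] at h ⊢; exact h.symm)
  set Q : ℂ := (z - t) ^ 3 * (1 - z) ^ 3 * (1 - t) ^ 5 with hQdef
  have e1 : ((1 + 4 * t + t ^ 2) / (1 - t) ^ 5) * (z - t) ^ (-1 : ℤ)
      = (1 + 4 * t + t ^ 2) * ((z - t) ^ 2 * (1 - z) ^ 3) / Q := by
    rw [zpow_neg, zpow_one, hQdef]; field_simp
  have e2 : ((2 * t + t ^ 2) / (1 - t) ^ 4) * (z - t) ^ (-2 : ℤ)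
      = (2 * t + t ^ 2) * ((1 - t) * (z - t) * (1 - z) ^ 3) / Q := by
    rw [show (-2 : ℤ) = -(2:ℕ) by norm_num, zpow_neg, zpow_natCast, hQdef]; field_simp
  have e3 : (t ^ 2 / (1 - t) ^ 3) * (z - t) ^ (-3 : ℤ)
      = t ^ 2 * ((1 - t) ^ 2 * (1 - z) ^ 3) / Q := by
    rw [show (-3 : ℤ) = -(3:ℕ) by norm_num, zpow_neg, zpow_natCast, hQdef]; field_simp
  have e4 : (-((1 + 4 * t + t ^ 2) / (1 - t) ^ 5)) * (z - 1) ^ (-1 : ℤ)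
      = (1 + 4 * t + t ^ 2) * ((z - t) ^ 3 * (1 - z) ^ 2) / Q := by
    rw [zpow_neg, zpow_one, hQdef]; field_simp; ring
  have e5 : ((1 + 2 * t) / (1 - t) ^ 4) * (z - 1) ^ (-2 : ℤ)
      = (1 + 2 * t) * ((1 - t) * (z - t) ^ 3 * (1 - z)) / Q := by
    rw [show (-2 : ℤ) = -(2:ℕ) by norm_num, zpow_neg, zpow_natCast, hQdef]; field_simp; ring
  have e6 : (-(1 / (1 - t) ^ 3)) * (z - 1) ^ (-3 : ℤ)
      = (1 - t) ^ 2 * (z - t) ^ 3 / Q := by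
    rw [show (-3 : ℤ) = -(3:ℕ) by norm_num, zpow_neg, zpow_natCast, hQdef]; field_simp; ring
  rw [e1, e2, e3, e4, e5, e6]
  simp only [← add_div]
  rw [hQdef, div_eq_div_iff (mul_ne_zero (pow_ne_zero 3 hzt) (pow_ne_zero 3 h1z))
    (mul_ne_zero (mul_ne_zero (pow_ne_zero 3 hzt) (pow_ne_zero 3 h1z)) (pow_ne_zero 5 hDt))]
  ring

/-- **Molien formula for the Hilbert series of the dP₀ master space.**
For `t ∈ ℂ` and `r ∈ ℝ` with `|t| < r < 1`,
`(1/(2πi)) ∮_{|z|=r} z²/((z−t)³(1−z)³) dz = (1+4t+t²)/(1−t)⁵`. -/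
theorem molien_integral_dP0 (t : ℂ) (r : ℝ)
    (h₁ : ‖t‖ < r) (h₂ : r < 1) :
    (2 * Real.pi * Complex.I)⁻¹ *
        (∮ z in C(0, r), z ^ 2 / ((z - t) ^ 3 * (1 - z) ^ 3))
      = (1 + 4 * t + t ^ 2) / (1 - t) ^ 5 := by
  have hr0 : 0 < r := (norm_nonneg t).trans_lt h₁
  have hDt : (1 : ℂ) - t ≠ 0 := by
    have ht1 : ‖t‖ < 1 := h₁.trans h₂
    intro h
    rw [sub_eq_zero] at h
    rw [← h] at ht1
    simp at ht1
  -- membership facts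
  have hts : t ∉ Metric.sphere (0 : ℂ) r := by
    simp only [Metric.mem_sphere, Complex.dist_eq, sub_zero]
    exact fun h => absurd h h₁.ne
  have h1s : (1 : ℂ) ∉ Metric.sphere (0 : ℂ) r := by
    simp only [Metric.mem_sphere, Complex.dist_eq, sub_zero, map_one, norm_one]
    exact fun h => absurd h.symm h₂.ne
  have htb : t ∈ Metric.ball (0 : ℂ) r := by
    simpa [Metric.mem_ball, Complex.dist_eq] using h₁
  -- integrability of the pieces
  have intt : ∀ (n : ℤ) (A : ℂ), CircleIntegrable (fun z => A * (z - t) ^ n) 0 r := by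
    intro n A
    have h := (circleIntegrable_sub_zpow_iff (c := 0) (w := t) (R := r) (n := n)).mpr
      (Or.inr (Or.inr (by rwa [abs_of_pos hr0])))
    exact h.const_mul A
  have int1 : ∀ (n : ℤ) (A : ℂ), CircleIntegrable (fun z => A * (z - 1) ^ n) 0 r := by
    intro n A
    have h := (circleIntegrable_sub_zpow_iff (c := 0) (w := 1) (R := r) (n := n)).mpr
      (Or.inr (Or.inr (by rwa [abs_of_pos hr0])))
    exact h.const_mul A
  have i1 := intt (-1) ((1 + 4 * t + t ^ 2) / (1 - t) ^ 5)
  have i2 := intt (-2) ((2 * t + t ^ 2) / (1 - t) ^ 4)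
  have i3 := intt (-3) (t ^ 2 / (1 - t) ^ 3)
  have i4 := int1 (-1) (-((1 + 4 * t + t ^ 2) / (1 - t) ^ 5))
  have i5 := int1 (-2) ((1 + 2 * t) / (1 - t) ^ 4)
  have i6 := int1 (-3) (-(1 / (1 - t) ^ 3))
  -- the integral of (z-1)⁻¹ vanishes (1 is outside the disk)
  have hz1zero : (∮ z in C(0, r), (z - 1) ^ (-1 : ℤ)) = 0 := by
    have key : (∮ z in C(0, r), (z - 1)⁻¹) = 0 := by
      apply Complex.circleIntegral_eq_zero_of_differentiable_on_off_countable hr0.le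
        Set.countable_empty (s := ∅)
      · apply ContinuousOn.inv₀
        · exact (continuousOn_id.sub continuousOn_const)
        · intro z hz
          have : ‖z‖ ≤ r := by
            simpa [Complex.dist_eq] using hz
          intro h
          rw [sub_eq_zero] at h
          rw [h] at this
          simp at this
          linarith
      · intro z hz
        have hz' : ‖z‖ < r := by
          simpa [Complex.dist_eq] using hz.1
        have hne : z - 1 ≠ 0 := by
          intro h
          rw [sub_eq_zero] at h
          rw [h] at hz'
          simp at hz'
          linarith
        exact ((differentiableAt_id.sub_const 1)).inv hne
    simpa only [zpow_neg, zpow_one] using key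
  -- rewrite the integrand via partial fractions
  rw [circleIntegral.integral_congr hr0.le (g := fun z =>
      ((1 + 4 * t + t ^ 2) / (1 - t) ^ 5) * (z - t) ^ (-1 : ℤ)
        + ((2 * t + t ^ 2) / (1 - t) ^ 4) * (z - t) ^ (-2 : ℤ)
        + (t ^ 2 / (1 - t) ^ 3) * (z - t) ^ (-3 : ℤ)
        + (-((1 + 4 * t + t ^ 2) / (1 - t) ^ 5)) * (z - 1) ^ (-1 : ℤ)
        + ((1 + 2 * t) / (1 - t) ^ 4) * (z - 1) ^ (-2 : ℤ)
        + (-(1 / (1 - t) ^ 3)) * (z - 1) ^ (-3 : ℤ))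
    (fun z hz => by
      have hzt : z - t ≠ 0 := sub_ne_zero.mpr (fun h => hts (h ▸ hz))
      have hz1 : z - 1 ≠ 0 := sub_ne_zero.mpr (fun h => h1s (h ▸ hz))
      exact molien_eqOn t z hzt hz1 hDt)]
  rw [circleIntegral_add6 i1 i2 i3 i4 i5 i6]
  rw [circleIntegral.integral_const_mul, circleIntegral.integral_const_mul,
      circleIntegral.integral_const_mul, circleIntegral.integral_const_mul,
      circleIntegral.integral_const_mul, circleIntegral.integral_const_mul]
  have v1 : (∮ z in C(0, r), (z - t) ^ (-1 : ℤ)) = 2 * Real.pi * Complex.I := by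
    simpa only [zpow_neg, zpow_one] using circleIntegral.integral_sub_inv_of_mem_ball htb
  rw [v1, hz1zero,
      circleIntegral.integral_sub_zpow_of_ne (by decide : (-2 : ℤ) ≠ -1) 0 t r,
      circleIntegral.integral_sub_zpow_of_ne (by decide : (-3 : ℤ) ≠ -1) 0 t r,
      circleIntegral.integral_sub_zpow_of_ne (by decide : (-2 : ℤ) ≠ -1) 0 1 r,
      circleIntegral.integral_sub_zpow_of_ne (by decide : (-3 : ℤ) ≠ -1) 0 1 r]
  have hpi : (2 * Real.pi * Complex.I : ℂ) ≠ 0 := by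
    simp [Real.pi_ne_zero, Complex.I_ne_zero, Complex.ofReal_ne_zero]
  field_simp
  ring
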